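/- Oscillation example: Let α ∈ (0,1). Define ϑ_i = 1/i! for i ∈ ℕ, fix ϑ* ∈ (0,1] with ∫₀^{1/ϑ*} (1+u)^(α−2) du > 2 ∫_{1/ϑ*}^∞ (1+u)^(α−2) du, and let ℓ : [0, 1/ϑ*] → ℝ be the indicator of ⋃_{i≥1} (ϑ_{2i+1}/ϑ*, ϑ_{2i}/ϑ*]. Define h(ϑ) = ∫₀^{1/ϑ} ℓ(ϑ u) (1+u)^(α−2) du for ϑ ∈ (0,1]. Then h has no limit as ϑ → 0⁺; in fact, there exist ε* > 0 and i* ∈ ℕ such that |h(ϑ_{2i}) − h(ϑ_{2i−1})| ≥ ε* for all i ≥ i*. -/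

import Mathlib

open MeasureTheory Real Set Filter

lemma aux_tail (α b : ℝ) (hα : α < 1) (hb : 0 < b) :
    IntegrableOn (fun u : ℝ => (1 + u) ^ (α - 2)) (Ioi b) := by
  have h1 : IntegrableOn (fun t : ℝ => t ^ (α - 2)) (Ioi (b + 1)) :=
    integrableOn_Ioi_rpow_of_lt (by linarith) (by linarith)
  have hmp : MeasurePreserving (fun x : ℝ => x + 1) volume volume :=
    measurePreserving_add_right volume 1
  have := (hmp.integrableOn_comp_preimage
    (MeasurableEquiv.addRight (1:ℝ)).measurableEmbedding).2 h1
  have hpre : (fun x : ℝ => x + 1) ⁻¹' Ioi (b + 1) = Ioi b := by ext x; simp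
  rw [hpre] at this
  simpa [Function.comp_def, add_comm] using this

lemma aux_cont (α : ℝ) {x y : ℝ} (hx : 0 ≤ x) (hy : 0 ≤ y) :
    IntervalIntegrable (fun u : ℝ => (1 + u) ^ (α - 2)) volume x y := by
  apply ContinuousOn.intervalIntegrable
  intro u hu
  have h0 : (0:ℝ) ≤ u := le_trans (le_min hx hy) hu.1
  exact ((continuousAt_const.add continuousAt_id).rpow_const
    (Or.inl (by norm_num; linarith))).continuousWithinAt

set_option maxHeartbeats 1000000 in
theorem stmt_15 (α : ℝ) (hα : α ∈ Set.Ioo (0:ℝ) 1)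
    (th : ℕ → ℝ) (hth : ∀ i, th i = ((Nat.factorial i : ℝ))⁻¹)
    (ϑstar : ℝ) (hϑstar : ϑstar ∈ Set.Ioc (0:ℝ) 1)
    (hsep : (∫ u in (0:ℝ)..(1 / ϑstar), (1 + u) ^ (α - 2)) >
      2 * ∫ u in Set.Ioi (1 / ϑstar), (1 + u) ^ (α - 2))
    (ℓ : ℝ → ℝ)
    (hℓ : ℓ = Set.indicator (⋃ i ∈ {i : ℕ | 1 ≤ i}, Set.Ioc (th (2 * i + 1) / ϑstar) (th (2 * i) / ϑstar))
      (fun _ => (1:ℝ)))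
    (h : ℝ → ℝ)
    (hh : ∀ ϑ ∈ Set.Ioc (0:ℝ) 1, h ϑ = ∫ u in (0:ℝ)..(1 / ϑ), ℓ (ϑ * u) * (1 + u) ^ (α - 2)) :
    (¬ ∃ L : ℝ, Filter.Tendsto h (nhdsWithin 0 (Set.Ioi 0)) (nhds L)) ∧
      ∃ εstar > (0:ℝ), ∃ istar : ℕ, ∀ i ≥ istar, 1 ≤ i →
        εstar ≤ |h (th (2 * i)) - h (th (2 * i - 1))| := by
  obtain ⟨hα0, hα1⟩ := hα
  obtain ⟨hϑ0, hϑ1⟩ := hϑstar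
  set f : ℝ → ℝ := fun u => (1 + u) ^ (α - 2) with hfdef
  set b : ℝ := 1 / ϑstar with hbdef
  have hb0 : 0 < b := by positivity
  have hb1 : 1 ≤ b := by rw [hbdef, le_one_div (by norm_num) hϑ0]; simpa using hϑ1
  -- basic facts about f
  have hfpos : ∀ u : ℝ, 0 ≤ u → 0 < f u := fun u hu => rpow_pos_of_pos (by linarith) _
  have hfle1 : ∀ u : ℝ, 0 ≤ u → f u ≤ 1 := fun u hu =>
    rpow_le_one_of_one_le_of_nonpos (by linarith) (by linarith)
  have hT : IntegrableOn f (Ioi b) := aux_tail α b hα1 hb0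
  set T : ℝ := ∫ u in Ioi b, f u with hTdef
  have hT0 : 0 ≤ T := setIntegral_nonneg measurableSet_Ioi
    (fun u hu => (hfpos u (by exact le_of_lt (lt_of_lt_of_le hb0 hu.le))).le)
  set A : ℝ := ∫ u in (0:ℝ)..b, f u with hAdef
  have hAT : A > 2 * T := hsep
  set εstar : ℝ := (A - 2 * T) / 2 with hεdef
  have hε : 0 < εstar := by rw [hεdef]; linarith
  -- small interval integral bound
  have hsmall : ∀ c : ℝ, 0 ≤ c → (∫ u in (0:ℝ)..c, f u) ≤ c := by
    intro c hc
    have := intervalIntegral.integral_mono_on (μ := volume) hc (aux_cont α le_rfl hc)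
      (intervalIntegrable_const (c := (1:ℝ)))
      (fun u hu => hfle1 u hu.1)
    simpa using this
  -- measurability of ℓ
  set S : Set ℝ := ⋃ i ∈ {i : ℕ | 1 ≤ i}, Set.Ioc (th (2 * i + 1) / ϑstar) (th (2 * i) / ϑstar)
    with hSdef
  have hSm : MeasurableSet S := by
    apply MeasurableSet.biUnion (Set.to_countable _)
    intro i _; exact measurableSet_Ioc
  have hℓmeas : Measurable ℓ := by rw [hℓ]; exact measurable_const.indicator hSm
  have hℓ0 : ∀ x, 0 ≤ ℓ x := by
    intro x; rw [hℓ]; exact Set.indicator_nonneg (fun _ _ => by norm_num) x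
  have hℓ1 : ∀ x, ℓ x ≤ 1 := by
    intro x; rw [hℓ]
    exact Set.indicator_le' (fun _ _ => le_rfl) (fun _ _ => by norm_num) x
  -- integrability of the integrand
  have hgInt : ∀ ϑ : ℝ, ∀ x y : ℝ, 0 ≤ x → 0 ≤ y →
      IntervalIntegrable (fun u => ℓ (ϑ * u) * f u) volume x y := by
    intro ϑ x y hx hy
    rw [intervalIntegrable_iff]
    refine Integrable.bdd_mul (c := 1) (intervalIntegrable_iff.mp (aux_cont α hx hy))
      ((hℓmeas.comp (measurable_const_mul ϑ)).aestronglyMeasurable) (ae_of_all _ fun u => ?_)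
    rw [Real.norm_eq_abs, abs_le]; exact ⟨by linarith [hℓ0 (ϑ * u)], hℓ1 _⟩
  -- positivity of th
  have hthpos : ∀ n, 0 < th n := by
    intro n; rw [hth]; positivity
  have hthle1 : ∀ n, th n ≤ 1 := by
    intro n; rw [hth]
    rw [inv_le_one_iff₀]
    right; exact_mod_cast Nat.one_le_iff_ne_zero.mpr (Nat.factorial_ne_zero n)
  have hthanti : ∀ m n : ℕ, m ≤ n → th n ≤ th m := by
    intro m n hmn; rw [hth, hth]
    apply inv_anti₀
    · exact_mod_cast Nat.factorial_pos m
    · exact_mod_cast Nat.factorial_le hmn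
  -- factorial identities
  have hfact_id : ∀ i : ℕ, 1 ≤ i → th (2*i-1) = (2*(i:ℝ)) * th (2*i) := by
    intro i hi
    have h2 : 2*i - 1 + 1 = 2*i := by omega
    have hfs : (Nat.factorial (2*i) : ℝ) = (2*(i:ℝ)) * (Nat.factorial (2*i-1) : ℝ) := by
      rw [← h2, Nat.factorial_succ]; push_cast [h2]; ring
    rw [hth, hth, hfs]
    have h1 : (Nat.factorial (2*i-1) : ℝ) ≠ 0 := by
      exact_mod_cast Nat.factorial_ne_zero _
    have h3 : (2*(i:ℝ)) ≠ 0 := by positivity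
    field_simp
  have hfact_id2 : ∀ i : ℕ, th (2*i+1) * (2*(i:ℝ)+1) = th (2*i) := by
    intro i
    have hfs : (Nat.factorial (2*i+1) : ℝ) = (2*(i:ℝ)+1) * (Nat.factorial (2*i) : ℝ) := by
      rw [Nat.factorial_succ]; push_cast; ring
    rw [hth, hth, hfs]
    have h1 : (Nat.factorial (2*i) : ℝ) ≠ 0 := by exact_mod_cast Nat.factorial_ne_zero _
    have h3 : (2*(i:ℝ)+1) ≠ 0 := by positivity
    field_simp
  -- main estimate
  have main : ∀ i : ℕ, 1 ≤ i → b ≤ (i:ℝ) → b / εstar ≤ (i:ℝ) →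
      εstar ≤ h (th (2*i)) - h (th (2*i-1)) := by
    intro i hi1 hib hibe
    have hipos : (0:ℝ) < (i:ℝ) := by exact_mod_cast hi1
    have hp0 : 0 < th (2*i) := hthpos _
    have hq0 : 0 < th (2*i-1) := hthpos _
    have hqp : th (2*i-1) = (2*(i:ℝ)) * th (2*i) := hfact_id i hi1
    have hrp : th (2*i+1) * (2*(i:ℝ)+1) = th (2*i) := hfact_id2 i
    have hqi : th (2*i-1) ≤ 1/(i:ℝ) := by
      rw [hth]
      rw [one_div, inv_le_inv₀ (by exact_mod_cast Nat.factorial_pos _) hipos]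
      have : i ≤ 2*i-1 := by omega
      calc (i:ℝ) ≤ ((2*i-1 : ℕ):ℝ) := by exact_mod_cast this
        _ ≤ (Nat.factorial (2*i-1) : ℝ) := by exact_mod_cast Nat.self_le_factorial _
    have hib1 : 1 ≤ (i:ℝ) * ϑstar := by
      rw [hbdef, div_le_iff₀ hϑ0] at hib; linarith
    have hqϑ : th (2*i-1) ≤ ϑstar := by
      refine le_trans hqi ?_
      rw [div_le_iff₀ hipos]; nlinarith
    have hpϑ : th (2*i) ≤ ϑstar :=
      le_trans (hthanti (2*i-1) (2*i) (by omega)) hqϑ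
    set a : ℝ := 1/((2*(i:ℝ)+1) * ϑstar) with hadef
    set c : ℝ := 1/((2*(i:ℝ)) * ϑstar) with hcdef
    have ha0 : 0 < a := by rw [hadef]; positivity
    have hc0 : 0 < c := by rw [hcdef]; positivity
    have hac : a ≤ c := by
      rw [hadef, hcdef]
      apply one_div_le_one_div_of_le (by positivity)
      nlinarith
    have hcb : c ≤ b := by
      rw [hcdef, hbdef]
      apply one_div_le_one_div_of_le hϑ0
      nlinarith
    have hab : a ≤ b := le_trans hac hcb
    have h2c : 2 * c ≤ εstar := by
      have hkey : 1 ≤ (i:ℝ) * (ϑstar * εstar) := by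
        rw [hbdef, div_div, div_le_iff₀ (by positivity)] at hibe; linarith
      have hx : (0:ℝ) < 2*(i:ℝ)*ϑstar := by positivity
      rw [hcdef, mul_one_div, div_le_iff₀ hx]
      nlinarith
    have hbB : b ≤ 1/th (2*i) := by
      rw [hbdef]; exact one_div_le_one_div_of_le hp0 hpϑ
    have hbB' : b ≤ 1/th (2*i-1) := by
      rw [hbdef]; exact one_div_le_one_div_of_le hq0 hqϑ
    have hB0 : (0:ℝ) ≤ 1/th (2*i) := le_trans hb0.le hbB
    have hB'0 : (0:ℝ) ≤ 1/th (2*i-1) := le_trans hb0.le hbB'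
    -- lower bound for h (th (2*i))
    have hlow : A - a ≤ h (th (2*i)) := by
      rw [hh (th (2*i)) ⟨hp0, hthle1 _⟩]
      have e1 := intervalIntegral.integral_add_adjacent_intervals
        (hgInt (th (2*i)) 0 a le_rfl ha0.le) (hgInt (th (2*i)) a b ha0.le hb0.le)
      have e2 := intervalIntegral.integral_add_adjacent_intervals
        (hgInt (th (2*i)) 0 b le_rfl hb0.le) (hgInt (th (2*i)) b (1/th (2*i)) hb0.le hB0)
      have hmid : (∫ u in a..b, ℓ (th (2*i) * u) * f u) = ∫ u in a..b, f u := by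
        rw [intervalIntegral.integral_of_le hab, intervalIntegral.integral_of_le hab]
        apply setIntegral_congr_fun measurableSet_Ioc
        intro u hu
        have hmem : th (2*i) * u ∈ S := by
          rw [hSdef]
          apply mem_biUnion (show i ∈ {i : ℕ | 1 ≤ i} from hi1)
          constructor
          · have hra : th (2*i+1) / ϑstar = th (2*i) * a := by
              rw [hadef, mul_one_div, div_eq_div_iff hϑ0.ne' (by positivity)]
              linear_combination ϑstar * hrp
            rw [hra]
            exact (mul_lt_mul_iff_right₀ hp0).2 hu.1
          · calc th (2*i) * u ≤ th (2*i) * b := (mul_le_mul_iff_right₀ hp0).2 hu.2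
              _ = th (2*i) / ϑstar := by rw [hbdef]; ring
        have hone : ℓ (th (2*i) * u) = 1 := by
          rw [hℓ]; exact Set.indicator_of_mem hmem _
        simp only [hone, one_mul]
      have hnn1 : 0 ≤ ∫ u in (0:ℝ)..a, ℓ (th (2*i) * u) * f u :=
        intervalIntegral.integral_nonneg ha0.le
          (fun u hu => mul_nonneg (hℓ0 _) (hfpos u hu.1).le)
      have hnn2 : 0 ≤ ∫ u in b..(1/th (2*i)), ℓ (th (2*i) * u) * f u :=
        intervalIntegral.integral_nonneg hbB
          (fun u hu => mul_nonneg (hℓ0 _) (hfpos u (le_trans hb0.le hu.1)).le)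
      have hAsplit := intervalIntegral.integral_add_adjacent_intervals
        (aux_cont α le_rfl ha0.le) (aux_cont α ha0.le hb0.le)
      have hsm := hsmall a ha0.le
      rw [← e2, ← e1, hmid]
      have hfab : (∫ u in a..b, f u) = A - ∫ u in (0:ℝ)..a, f u := by
        rw [hAdef, ← hAsplit]; ring
      rw [hfab]
      linarith
    -- upper bound for h (th (2*i-1))
    have hup : h (th (2*i-1)) ≤ c + T := by
      rw [hh (th (2*i-1)) ⟨hq0, hthle1 _⟩]
      have e1 := intervalIntegral.integral_add_adjacent_intervals
        (hgInt (th (2*i-1)) 0 c le_rfl hc0.le) (hgInt (th (2*i-1)) c b hc0.le hb0.le)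
      have e2 := intervalIntegral.integral_add_adjacent_intervals
        (hgInt (th (2*i-1)) 0 b le_rfl hb0.le)
        (hgInt (th (2*i-1)) b (1/th (2*i-1)) hb0.le hB'0)
      have h1 : (∫ u in (0:ℝ)..c, ℓ (th (2*i-1) * u) * f u) ≤ c := by
        have := intervalIntegral.integral_mono_on (μ := volume) hc0.le
          (hgInt (th (2*i-1)) 0 c le_rfl hc0.le) (intervalIntegrable_const (c := (1:ℝ)))
          (fun u hu => mul_le_one₀ (hℓ1 _) (hfpos u hu.1).le (hfle1 u hu.1))
        simpa using this
      have h2 : (∫ u in c..b, ℓ (th (2*i-1) * u) * f u) = 0 := by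
        rw [intervalIntegral.integral_of_le hcb]
        have heq : EqOn (fun u => ℓ (th (2*i-1) * u) * f u) (fun _ => (0:ℝ)) (Set.Ioc c b) := by
          intro u hu
          have hqulb : th (2*i) / ϑstar < th (2*i-1) * u := by
            have hqc : th (2*i-1) * c = th (2*i) / ϑstar := by
              rw [hcdef, hqp, mul_one_div, div_eq_div_iff (by positivity) hϑ0.ne']
              ring
            rw [← hqc]
            exact (mul_lt_mul_iff_right₀ hq0).2 hu.1
          have hquub : th (2*i-1) * u ≤ th (2*i-1) / ϑstar := by
            calc th (2*i-1) * u ≤ th (2*i-1) * b := (mul_le_mul_iff_right₀ hq0).2 hu.2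
              _ = th (2*i-1) / ϑstar := by rw [hbdef]; ring
          have hnotmem : th (2*i-1) * u ∉ S := by
            rw [hSdef]
            intro hm
            obtain ⟨j, hj1, hj2⟩ := mem_iUnion₂.mp hm
            have hj1' : (1:ℕ) ≤ j := hj1
            rcases le_or_gt i j with hij | hij
            · have h4 : th (2*j) ≤ th (2*i) := hthanti (2*i) (2*j) (by omega)
              have h5 : th (2*j) / ϑstar ≤ th (2*i) / ϑstar := by gcongr
              linarith [hj2.2, h5, hqulb]
            · have h4 : th (2*i-1) ≤ th (2*j+1) := hthanti (2*j+1) (2*i-1) (by omega)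
              have h5 : th (2*i-1) / ϑstar ≤ th (2*j+1) / ϑstar := by gcongr
              linarith [hj2.1, h5, hquub]
          have hzero : ℓ (th (2*i-1) * u) = 0 := by
            rw [hℓ]; exact Set.indicator_of_notMem hnotmem _
          simp [hzero]
        rw [setIntegral_congr_fun measurableSet_Ioc heq]
        simp
      have h3 : (∫ u in b..(1/th (2*i-1)), ℓ (th (2*i-1) * u) * f u) ≤ T := by
        have hs1 : (∫ u in b..(1/th (2*i-1)), ℓ (th (2*i-1) * u) * f u)
            ≤ ∫ u in b..(1/th (2*i-1)), f u := by
          apply intervalIntegral.integral_mono_on hbB'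
            (hgInt (th (2*i-1)) b (1/th (2*i-1)) hb0.le hB'0)
            (aux_cont α hb0.le hB'0)
          intro u hu
          exact mul_le_of_le_one_left (hfpos u (le_trans hb0.le hu.1)).le (hℓ1 _)
        have hs2 : (∫ u in b..(1/th (2*i-1)), f u) ≤ T := by
          rw [intervalIntegral.integral_of_le hbB', hTdef]
          apply setIntegral_mono_set hT
          · filter_upwards [ae_restrict_mem measurableSet_Ioi] with u hu
            exact (hfpos u (le_trans hb0.le hu.le)).le
          · exact HasSubset.Subset.eventuallyLE Set.Ioc_subset_Ioi_self
        linarith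
      rw [← e2, ← e1, h2]
      linarith
    linarith
  -- choose istar
  have hist : ∀ i, ⌈max b (b/εstar)⌉₊ + 1 ≤ i → 1 ≤ i →
      εstar ≤ |h (th (2 * i)) - h (th (2 * i - 1))| := by
    intro i hi h1
    have hic : (⌈max b (b/εstar)⌉₊ : ℝ) ≤ (i:ℝ) := by
      have : ⌈max b (b/εstar)⌉₊ ≤ i := by omega
      exact_mod_cast this
    have hbi : b ≤ (i:ℝ) := le_trans (le_trans (le_max_left _ _) (Nat.le_ceil _)) hic
    have hbe : b/εstar ≤ (i:ℝ) := le_trans (le_trans (le_max_right _ _) (Nat.le_ceil _)) hic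
    exact le_trans (main i h1 hbi hbe) (le_abs_self _)
  constructor
  · rintro ⟨L, hL⟩
    have hfacttend : Tendsto (fun n : ℕ => (Nat.factorial n : ℝ)) atTop atTop :=
      tendsto_natCast_atTop_atTop.comp (tendsto_atTop_mono Nat.self_le_factorial tendsto_id)
    have hth0 : Tendsto th atTop (nhds 0) := by
      have hthfun : th = fun n => ((Nat.factorial n : ℝ))⁻¹ := funext hth
      rw [hthfun]
      exact tendsto_inv_atTop_zero.comp hfacttend
    have h2x : Tendsto (fun i : ℕ => 2*i) atTop atTop :=
      tendsto_atTop_mono (fun i => by simp only [id_eq]; omega) tendsto_id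
    have h2y : Tendsto (fun i : ℕ => 2*i-1) atTop atTop :=
      tendsto_atTop_mono (fun i => by simp only [id_eq]; omega) tendsto_id
    have hx : Tendsto (fun i : ℕ => th (2*i)) atTop (nhdsWithin 0 (Ioi 0)) :=
      tendsto_nhdsWithin_of_tendsto_nhds_of_eventually_within _ (hth0.comp h2x)
        (Eventually.of_forall fun i => hthpos _)
    have hy : Tendsto (fun i : ℕ => th (2*i-1)) atTop (nhdsWithin 0 (Ioi 0)) :=
      tendsto_nhdsWithin_of_tendsto_nhds_of_eventually_within _ (hth0.comp h2y)
        (Eventually.of_forall fun i => hthpos _)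
    have hsub : Tendsto (fun i : ℕ => h (th (2*i)) - h (th (2*i-1))) atTop (nhds 0) := by
      have := (hL.comp hx).sub (hL.comp hy)
      simpa using this
    have habs : Tendsto (fun i : ℕ => |h (th (2*i)) - h (th (2*i-1))|) atTop (nhds 0) := by
      simpa using hsub.abs
    have hev := habs.eventually_lt_const hε
    obtain ⟨i, hi1, hi2⟩ := ((eventually_ge_atTop (max (⌈max b (b/εstar)⌉₊ + 1) 1)).and hev).exists
    exact absurd (hist i (le_trans (le_max_left _ _) hi1) (le_trans (le_max_right _ _) hi1))
      (not_le.2 hi2)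
  · exact ⟨εstar, hε, ⌈max b (b/εstar)⌉₊ + 1, hist⟩
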